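/- Let c : ℝ[X] →ₗ[ℝ] ℝ be a linear functional on real polynomials and write c_i = c(X^i). Let k ≥ 1 and suppose the k×k Hankel matrix H with entries H(i,j) = c_{i+j+1} (for i, j ∈ Fin k) has nonzero determinant. Then there exists a unique real polynomial P of degree at most k such that P(0) = 1 and c(X^i · P) = 0 for all i < k. -/

import Mathlib

open Matrix Polynomial Finset

private lemma keyc (c : ℝ[X] →ₗ[ℝ] ℝ) (k : ℕ) (Q : ℝ[X]) (hQ : Q.natDegree ≤ k) (i : ℕ) :
    c (X ^ i * Q) = ∑ m ∈ range (k + 1), Q.coeff m * c (X ^ (i + m)) := by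
  conv_lhs => rw [Q.as_sum_range' (k + 1) (Nat.lt_succ_of_le hQ)]
  rw [Finset.mul_sum, map_sum]
  refine Finset.sum_congr rfl fun m _ => ?_
  have : X ^ i * (monomial m) (Q.coeff m) = Q.coeff m • X ^ (i + m) := by
    rw [← C_mul_X_pow_eq_monomial, smul_eq_C_mul]; ring
  rw [this, _root_.map_smul, smul_eq_mul]

theorem stmt_3 (c : ℝ[X] →ₗ[ℝ] ℝ) (k : ℕ) (hk : 1 ≤ k)
    (H : Matrix (Fin k) (Fin k) ℝ)
    (hH : ∀ i j : Fin k, H i j = c (Polynomial.X ^ ((i : ℕ) + (j : ℕ) + 1)))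
    (hdet : H.det ≠ 0) :
    ∃! P : ℝ[X], P.natDegree ≤ k ∧ P.eval 0 = 1 ∧
      ∀ i < k, c (Polynomial.X ^ i * P) = 0 := by
  have hU : IsUnit H.det := isUnit_iff_ne_zero.mpr hdet
  set v : Fin k → ℝ := fun i => -(c (X ^ (i : ℕ))) with hv
  -- key computation
  have hc : ∀ Q : ℝ[X], Q.natDegree ≤ k → Q.coeff 0 = 1 → ∀ i : Fin k,
      c (X ^ (i : ℕ) * Q) = H.mulVec (fun j => Q.coeff ((j : ℕ) + 1)) i + c (X ^ (i : ℕ)) := by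
    intro Q hQ h0 i
    rw [keyc c k Q hQ, Finset.sum_range_succ']
    congr 1
    · rw [Matrix.mulVec, dotProduct,
        ← Fin.sum_univ_eq_sum_range (fun j => Q.coeff (j + 1) * c (X ^ ((i : ℕ) + (j + 1)))) k]
      refine Finset.sum_congr rfl fun j _ => ?_
      rw [hH, mul_comm]
      ring_nf
    · simp [h0]
  have equiv : ∀ Q : ℝ[X], Q.natDegree ≤ k → Q.coeff 0 = 1 →
      ((∀ i < k, c (X ^ i * Q) = 0) ↔ H.mulVec (fun j => Q.coeff ((j : ℕ) + 1)) = v) := by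
    intro Q hQ h0
    constructor
    · intro ho
      funext i
      have := hc Q hQ h0 i
      have h2 := ho i i.isLt
      rw [h2] at this
      simp [hv]; linarith
    · intro hm i hi
      have := hc Q hQ h0 ⟨i, hi⟩
      rw [hm] at this
      simp [hv] at this ⊢
      simpa using this
  set a : Fin k → ℝ := H⁻¹.mulVec v with ha
  have hHa : H.mulVec a = v := by
    rw [ha, Matrix.mulVec_mulVec, Matrix.mul_nonsing_inv H hU, Matrix.one_mulVec]
  set P : ℝ[X] := 1 + ∑ j : Fin k, C (a j) * X ^ ((j : ℕ) + 1) with hP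
  have hP0 : P.coeff 0 = 1 := by
    simp [hP, Polynomial.finset_sum_coeff, coeff_C_mul, coeff_X_pow]
  have hPc : ∀ j : Fin k, P.coeff ((j : ℕ) + 1) = a j := by
    intro j
    rw [hP]
    rw [coeff_add, Polynomial.finset_sum_coeff]
    have h1 : (1 : ℝ[X]).coeff ((j : ℕ) + 1) = 0 := by rw [coeff_one, if_neg (by omega)]
    rw [h1, zero_add]
    rw [Finset.sum_eq_single j]
    · simp [coeff_C_mul, coeff_X_pow]
    · intro b _ hb
      simp only [coeff_C_mul, coeff_X_pow]
      have : (j : ℕ) + 1 ≠ (b : ℕ) + 1 := by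
        simp [Fin.val_eq_val]; exact fun h => hb h.symm
      simp [this, Fin.val_inj, hb.symm]
    · simp
  have hPhigh : ∀ m, k < m → P.coeff m = 0 := by
    intro m hm
    rw [hP, coeff_add, Polynomial.finset_sum_coeff]
    have h1 : (1 : ℝ[X]).coeff m = 0 := by
      rw [coeff_one, if_neg (by omega)]
    rw [h1, zero_add]
    refine Finset.sum_eq_zero fun j _ => ?_
    simp only [coeff_C_mul, coeff_X_pow]
    have : m ≠ (j : ℕ) + 1 := by have := j.isLt; omega
    simp [this]
  have hPd : P.natDegree ≤ k := Polynomial.natDegree_le_iff_coeff_eq_zero.mpr hPhigh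
  have hPvec : (fun j : Fin k => P.coeff ((j : ℕ) + 1)) = a := funext hPc
  have hPo : ∀ i < k, c (X ^ i * P) = 0 := by
    refine (equiv P hPd hP0).mpr ?_
    rw [hPvec]; exact hHa
  refine ⟨P, ⟨hPd, by rw [← coeff_zero_eq_eval_zero]; exact hP0, hPo⟩, ?_⟩
  rintro Q ⟨hQd, hQ0, hQo⟩
  have hQc0 : Q.coeff 0 = 1 := by rw [coeff_zero_eq_eval_zero]; exact hQ0
  have hb : H.mulVec (fun j => Q.coeff ((j : ℕ) + 1)) = v := (equiv Q hQd hQc0).mp hQo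
  have hba : (fun j : Fin k => Q.coeff ((j : ℕ) + 1)) = a := by
    rw [ha, ← hb, Matrix.mulVec_mulVec, Matrix.nonsing_inv_mul H hU, Matrix.one_mulVec]
  ext m
  rcases m with _ | m
  · rw [hQc0, hP0]
  · rcases Nat.lt_or_ge m k with hmk | hmk
    · have := congrFun hba ⟨m, hmk⟩
      simp only at this
      rw [this, hPc ⟨m, hmk⟩]
    · rw [Polynomial.coeff_eq_zero_of_natDegree_lt (lt_of_le_of_lt hQd (by omega)),
        hPhigh (m + 1) (by omega)]
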